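/- Let H be an M×N matrix with nonnegative entries and y ∈ {0,1}^M. For every binary solution z (i.e., z ∈ {0,1}^N with T(Hz) = y), we have z[n] ≤ x_max[n] for all n, where x_max = ¬T(Hᵀ(¬y)). -/

import Mathlib

open Finset

/-- Positivity thresholding operator. -/
noncomputable def T {K : ℕ} (v : Fin K → ℝ) : Fin K → ℝ := fun k => if 0 < v k then 1 else 0

/-- Entrywise Boolean negation (swaps 0 and 1 on binary vectors). -/
def bneg {K : ℕ} (v : Fin K → ℝ) : Fin K → ℝ := fun k => 1 - v k

/-- Matrix-vector product. -/
def mulv {M N : ℕ} (H : Fin M → Fin N → ℝ) (x : Fin N → ℝ) : Fin M → ℝ :=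
  fun m => ∑ n, H m n * x n

/-- Transpose. -/
def tr {M N : ℕ} (H : Fin M → Fin N → ℝ) : Fin N → Fin M → ℝ := fun n m => H m n

/-- Silhouette operator. -/
noncomputable def S {M N : ℕ} (H : Fin M → Fin N → ℝ) (x : Fin N → ℝ) : Fin M → ℝ := T (mulv H x)

/-- Maximal solution candidate. -/
noncomputable def xmax {M N : ℕ} (H : Fin M → Fin N → ℝ) (y : Fin M → ℝ) : Fin N → ℝ :=
  bneg (T (mulv (tr H) (bneg y)))

/-- A vector is binary if each entry is 0 or 1. -/
def IsBin {K : ℕ} (v : Fin K → ℝ) : Prop := ∀ k, v k = 0 ∨ v k = 1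

theorem stmt_4 {M N : ℕ} (H : Fin M → Fin N → ℝ) (hH : ∀ m n, 0 ≤ H m n)
    (y : Fin M → ℝ) (hy : IsBin y)
    (z : Fin N → ℝ) (hz : IsBin z) (hsol : S H z = y) :
    ∀ n, z n ≤ xmax H y n := by
  intro n
  rcases hz n with h0 | h1
  · rw [h0]
    simp only [xmax, bneg, T]
    split <;> norm_num
  · rw [h1]
    simp only [xmax, bneg, T]
    have hsum : (mulv (tr H) (bneg y)) n = 0 := by
      simp only [mulv, tr, bneg]
      apply Finset.sum_eq_zero
      intro m _
      rcases hy m with hy0 | hy1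
      · -- y m = 0, so S H z m = 0, sum H m k * z k = 0
        have hS : S H z m = 0 := by rw [hsol, hy0]
        simp only [S, T, mulv] at hS
        have hnot : ¬ (0 < ∑ k, H m k * z k) := by
          intro h; simp only [h, ↓reduceIte] at hS; norm_num at hS
        have hle : ∑ k, H m k * z k ≤ 0 := le_of_not_gt hnot
        have hge : 0 ≤ ∑ k, H m k * z k := Finset.sum_nonneg (fun k _ => by
          rcases hz k with h | h <;> rw [h] <;> simp [hH m k])
        have heq : ∑ k, H m k * z k = 0 := le_antisymm hle hge
        have := (Finset.sum_eq_zero_iff_of_nonneg (fun k _ => by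
          rcases hz k with h | h <;> rw [h] <;> simp [hH m k])).mp heq n (Finset.mem_univ n)
        rw [h1, mul_one] at this
        rw [this]; ring
      · rw [hy1]; ring
    rw [hsum]
    norm_num
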